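/- For x > −1/2, the inequality [Γ(x+1)/Γ(x+1/2)]² < (x + 1/2)·√((x+1/2)/(x+1)) holds. -/

import Mathlib

open MeasureTheory Set intervalIntegral

noncomputable def myB (a : ℝ) : ℝ := ∫ t in (0:ℝ)..1, t ^ (a - 1) * (1 - t) ^ (-(1/2) : ℝ)

lemma myB_integrable {a : ℝ} (ha : 0 < a) :
    IntervalIntegrable (fun t : ℝ => t ^ (a - 1) * (1 - t) ^ (-(1/2) : ℝ)) volume 0 1 := by
  have h := Complex.betaIntegral_convergent (u := (a : ℂ)) (v := ((1:ℝ)/2 : ℂ)) (by simpa using ha)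
    (by norm_num)
  constructor
  · refine MeasureTheory.IntegrableOn.congr_fun (h.1.re) ?_ measurableSet_Ioc
    intro x hx
    have hx0 : (0:ℝ) ≤ x := hx.1.le
    have hx1 : (0:ℝ) ≤ 1 - x := by linarith [hx.2]
    dsimp only
    rw [show ((a:ℂ) - 1) = ((a - 1 : ℝ) : ℂ) by push_cast; ring,
      show (((1:ℝ)/2 : ℂ) - 1) = ((-(1/2) : ℝ) : ℂ) by push_cast; ring,
      show (1 - (x:ℂ)) = ((1 - x : ℝ) : ℂ) by push_cast; ring,
      ← Complex.ofReal_cpow hx0, ← Complex.ofReal_cpow hx1, ← Complex.ofReal_mul]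
    simp
  · simp [IntegrableOn, Ioc_eq_empty (by norm_num : ¬ (1:ℝ) < 0)]

lemma myB_eq_gamma {a : ℝ} (ha : 0 < a) :
    Real.Gamma a * Real.Gamma (1/2) = Real.Gamma (a + 1/2) * myB a := by
  have h := Complex.Gamma_mul_Gamma_eq_betaIntegral (s := (a : ℂ)) (t := ((1:ℝ)/2 : ℂ))
    (by simpa using ha) (by norm_num)
  have hbeta : Complex.betaIntegral (a : ℂ) ((1:ℝ)/2 : ℂ) = (myB a : ℂ) := by
    rw [Complex.betaIntegral]
    rw [show (∫ x in (0:ℝ)..1, (x:ℂ) ^ ((a:ℂ) - 1) * (1 - (x:ℂ)) ^ (((1:ℝ)/2 : ℂ) - 1))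
        = ∫ x in (0:ℝ)..1, ((x ^ (a - 1) * (1 - x) ^ (-(1/2) : ℝ) : ℝ) : ℂ) from ?_]
    · exact integral_ofReal
    refine intervalIntegral.integral_congr ?_
    intro x hx
    rw [uIcc_of_le (by norm_num : (0:ℝ) ≤ 1)] at hx
    have hx0 : (0:ℝ) ≤ x := hx.1
    have hx1 : (0:ℝ) ≤ 1 - x := by linarith [hx.2]
    dsimp only
    rw [show ((a:ℂ) - 1) = ((a - 1 : ℝ) : ℂ) by push_cast; ring,
      show (((1:ℝ)/2 : ℂ) - 1) = ((-(1/2) : ℝ) : ℂ) by push_cast; ring,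
      show (1 - (x:ℂ)) = ((1 - x : ℝ) : ℂ) by push_cast; ring,
      ← Complex.ofReal_cpow hx0, ← Complex.ofReal_cpow hx1, ← Complex.ofReal_mul]
  rw [hbeta] at h
  have : ((Real.Gamma a * Real.Gamma (1/2) : ℝ) : ℂ)
      = ((Real.Gamma (a + 1/2) * myB a : ℝ) : ℂ) := by
    push_cast
    rw [← Complex.Gamma_ofReal, ← Complex.Gamma_ofReal, ← Complex.Gamma_ofReal] at *
    convert h using 2 <;> push_cast <;> ring_nf
  exact_mod_cast this


lemma myB_pos {a : ℝ} (ha : 0 < a) : 0 < myB a := by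
  refine intervalIntegral_pos_of_pos_on (myB_integrable ha) (fun x hx => ?_) one_pos
  have h1 : 0 < x ^ (a - 1) := Real.rpow_pos_of_pos hx.1 _
  have h2 : 0 < (1 - x) ^ (-(1/2) : ℝ) := Real.rpow_pos_of_pos (by linarith [hx.2]) _
  positivity

lemma myB_amgm {a s : ℝ} (ha : 0 < a) (hs : 0 < s) :
    2 * myB (a + 1/2) < s * myB a + myB (a + 1) / s := by
  have hia := myB_integrable ha
  have hia2 := myB_integrable (by linarith : (0:ℝ) < a + 1/2)
  have hia1 := myB_integrable (by linarith : (0:ℝ) < a + 1)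
  have hg : IntervalIntegrable (fun t : ℝ =>
      s * (t ^ (a - 1) * (1 - t) ^ (-(1/2) : ℝ)) +
      (t ^ (a + 1 - 1) * (1 - t) ^ (-(1/2) : ℝ)) / s) volume 0 1 := by
    exact (hia.const_mul s).add (hia1.div_const s)
  have hf : IntervalIntegrable (fun t : ℝ =>
      2 * (t ^ (a + 1/2 - 1) * (1 - t) ^ (-(1/2) : ℝ))) volume 0 1 := hia2.const_mul 2
  -- pointwise facts
  have hpt : ∀ x : ℝ, 0 < x → x ≤ 1 →
      2 * (x ^ (a + 1/2 - 1) * (1 - x) ^ (-(1/2) : ℝ)) +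
      (x ^ (a - 1) * (1 - x) ^ (-(1/2) : ℝ) / s) * (s - Real.sqrt x) ^ 2
      = s * (x ^ (a - 1) * (1 - x) ^ (-(1/2) : ℝ)) +
        (x ^ (a + 1 - 1) * (1 - x) ^ (-(1/2) : ℝ)) / s := by
    intro x hx0 hx1
    have e1 : x ^ (a + 1/2 - 1) = x ^ (a - 1) * Real.sqrt x := by
      rw [Real.sqrt_eq_rpow, ← Real.rpow_add hx0]; ring_nf
    have e2 : x ^ (a + 1 - 1) = x ^ (a - 1) * x := by
      rw [show a + 1 - 1 = (a - 1) + 1 by ring, Real.rpow_add hx0, Real.rpow_one]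
    have hsx : Real.sqrt x ^ 2 = x := Real.sq_sqrt hx0.le
    rw [e1, e2]
    field_simp
    linear_combination ((1 - x) ^ (-(1/2) : ℝ)) * hsx
  have hle : (fun t : ℝ => 2 * (t ^ (a + 1/2 - 1) * (1 - t) ^ (-(1/2) : ℝ)))
      ≤ᵐ[volume.restrict (Ioc (0:ℝ) 1)] (fun t : ℝ =>
      s * (t ^ (a - 1) * (1 - t) ^ (-(1/2) : ℝ)) +
      (t ^ (a + 1 - 1) * (1 - t) ^ (-(1/2) : ℝ)) / s) := by
    rw [Filter.EventuallyLE, ae_restrict_iff' measurableSet_Ioc]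
    refine ae_of_all _ fun x hx => ?_
    have := hpt x hx.1 hx.2
    have hA : 0 < x ^ (a - 1) := Real.rpow_pos_of_pos hx.1 _
    have hw : 0 ≤ (1 - x) ^ (-(1/2) : ℝ) := Real.rpow_nonneg (by linarith [hx.2]) _
    have hterm : 0 ≤ x ^ (a - 1) * (1 - x) ^ (-(1/2) : ℝ) / s * (s - Real.sqrt x) ^ 2 :=
      mul_nonneg (div_nonneg (mul_nonneg hA.le hw) hs.le) (sq_nonneg _)
    linarith
  have hlt : volume.restrict (Ioc (0:ℝ) 1) {x | (fun t : ℝ =>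
      2 * (t ^ (a + 1/2 - 1) * (1 - t) ^ (-(1/2) : ℝ))) x < (fun t : ℝ =>
      s * (t ^ (a - 1) * (1 - t) ^ (-(1/2) : ℝ)) +
      (t ^ (a + 1 - 1) * (1 - t) ^ (-(1/2) : ℝ)) / s) x} ≠ 0 := by
    have hsub : Ioo (0:ℝ) 1 \ {s ^ 2} ⊆ {x | (fun t : ℝ =>
        2 * (t ^ (a + 1/2 - 1) * (1 - t) ^ (-(1/2) : ℝ))) x < (fun t : ℝ =>
        s * (t ^ (a - 1) * (1 - t) ^ (-(1/2) : ℝ)) +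
        (t ^ (a + 1 - 1) * (1 - t) ^ (-(1/2) : ℝ)) / s) x} := by
      rintro x ⟨hx, hxs⟩
      have hx0 := hx.1
      have hx1 := hx.2
      have := hpt x hx0 hx1.le
      have hA : 0 < x ^ (a - 1) := Real.rpow_pos_of_pos hx0 _
      have hw : 0 < (1 - x) ^ (-(1/2) : ℝ) := Real.rpow_pos_of_pos (by linarith) _
      have hne : Real.sqrt x ≠ s := by
        intro h
        apply hxs
        simp only [mem_singleton_iff]
        rw [← h, Real.sq_sqrt hx0.le]
      have hsq : 0 < (s - Real.sqrt x) ^ 2 := by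
        have : s - Real.sqrt x ≠ 0 := fun h => hne (by linarith [sub_eq_zero.mp h])
        positivity
      simp only [mem_setOf_eq]
      have hterm : 0 < x ^ (a - 1) * (1 - x) ^ (-(1/2) : ℝ) / s * (s - Real.sqrt x) ^ 2 :=
        mul_pos (div_pos (mul_pos hA hw) hs) hsq
      linarith
    have h1 : volume.restrict (Ioc (0:ℝ) 1) (Ioo (0:ℝ) 1 \ {s ^ 2}) = 1 := by
      rw [Measure.restrict_apply (measurableSet_Ioo.diff (measurableSet_singleton _))]
      rw [inter_eq_left.mpr (fun x hx => Ioo_subset_Ioc_self hx.1)]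
      rw [measure_diff_null (measure_singleton _)]
      simp
    intro h
    have := measure_mono hsub (μ := volume.restrict (Ioc (0:ℝ) 1))
    rw [h, h1] at this
    exact absurd this (by simp)
  have key := integral_lt_integral_of_ae_le_of_measure_setOf_lt_ne_zero
    (le_of_lt one_pos) hf hg hle hlt
  have eL : (∫ t in (0:ℝ)..1, 2 * (t ^ (a + 1/2 - 1) * (1 - t) ^ (-(1/2) : ℝ)))
      = 2 * myB (a + 1/2) := by
    rw [myB, intervalIntegral.integral_const_mul]
  have eR : (∫ t in (0:ℝ)..1, (s * (t ^ (a - 1) * (1 - t) ^ (-(1/2) : ℝ)) +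
      (t ^ (a + 1 - 1) * (1 - t) ^ (-(1/2) : ℝ)) / s))
      = s * myB a + myB (a + 1) / s := by
    rw [intervalIntegral.integral_add (hia.const_mul s) (hia1.div_const s),
      intervalIntegral.integral_const_mul, intervalIntegral.integral_div, myB, myB]
  rw [eL, eR] at key
  exact key

lemma myB_cs {a : ℝ} (ha : 0 < a) : myB (a + 1/2) ^ 2 < myB a * myB (a + 1) := by
  have h1 := myB_pos ha
  have h2 := myB_pos (by linarith : (0:ℝ) < a + 1)
  have hu : 0 < Real.sqrt (myB a) := Real.sqrt_pos.mpr h1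
  have hv : 0 < Real.sqrt (myB (a + 1)) := Real.sqrt_pos.mpr h2
  have hs : 0 < Real.sqrt (myB (a + 1)) / Real.sqrt (myB a) := div_pos hv hu
  have key := myB_amgm ha hs
  have hq1 : Real.sqrt (myB a) ^ 2 = myB a := Real.sq_sqrt h1.le
  have hq2 : Real.sqrt (myB (a + 1)) ^ 2 = myB (a + 1) := Real.sq_sqrt h2.le
  have e : (Real.sqrt (myB (a + 1)) / Real.sqrt (myB a)) * myB a
      + myB (a + 1) / (Real.sqrt (myB (a + 1)) / Real.sqrt (myB a))
      = 2 * (Real.sqrt (myB a) * Real.sqrt (myB (a + 1))) := by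
    field_simp
    nlinarith [hq1, hq2]
  rw [e] at key
  have hlt : myB (a + 1/2) < Real.sqrt (myB a) * Real.sqrt (myB (a + 1)) := by linarith
  calc myB (a + 1/2) ^ 2 < (Real.sqrt (myB a) * Real.sqrt (myB (a + 1))) ^ 2 := by
        have := (myB_pos (by linarith : (0:ℝ) < a + 1/2)).le
        exact pow_lt_pow_left₀ hlt this (by norm_num)
    _ = myB a * myB (a + 1) := by rw [mul_pow, hq1, hq2]

lemma gamma_aux (a : ℝ) (ha : 0 < a) :
    (Real.Gamma (a + 1/2) / Real.Gamma a) ^ 2 < a * Real.sqrt (a / (a + 1/2)) := by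
  have ha2 : 0 < a + 1/2 := by linarith
  have ha3 : 0 < a + 1 := by linarith
  have hG1 : 0 < Real.Gamma a := Real.Gamma_pos_of_pos ha
  have hG2 : 0 < Real.Gamma (a + 1/2) := Real.Gamma_pos_of_pos ha2
  have hG3 : 0 < Real.Gamma (a + 1) := Real.Gamma_pos_of_pos ha3
  have hG4 : 0 < Real.Gamma (a + 3/2) := Real.Gamma_pos_of_pos (by linarith)
  have hc : 0 < Real.Gamma (1/2) := Real.Gamma_pos_of_pos (by norm_num)
  have e1 := myB_eq_gamma ha
  have e2 := myB_eq_gamma ha2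
  have e3 := myB_eq_gamma ha3
  rw [show a + 1/2 + 1/2 = a + 1 by ring] at e2
  rw [show a + 1 + 1/2 = a + 3/2 by ring] at e3
  have hcs := myB_cs ha
  have hB1 : myB a = Real.Gamma a * Real.Gamma (1/2) / Real.Gamma (a + 1/2) := by
    rw [eq_div_iff hG2.ne']; linarith [e1]
  have hB2 : myB (a + 1/2) = Real.Gamma (a + 1/2) * Real.Gamma (1/2) / Real.Gamma (a + 1) := by
    rw [eq_div_iff hG3.ne']; linarith [e2]
  have hB3 : myB (a + 1) = Real.Gamma (a + 1) * Real.Gamma (1/2) / Real.Gamma (a + 3/2) := by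
    rw [eq_div_iff hG4.ne']; linarith [e3]
  rw [hB1, hB2, hB3] at hcs
  rw [div_pow, div_mul_div_comm, div_lt_div_iff₀ (by positivity) (by positivity)] at hcs
  have key : Real.Gamma (a + 1/2) ^ 3 * Real.Gamma (a + 3/2) <
      Real.Gamma a * Real.Gamma (a + 1) ^ 3 := by
    have hc2 : 0 < Real.Gamma (1/2) ^ 2 := by positivity
    nlinarith [hcs, mul_pos hG1 hG3, mul_pos hG2 hG4]
  have r1 : Real.Gamma (a + 1) = a * Real.Gamma a := Real.Gamma_add_one ha.ne'
  have r2 : Real.Gamma (a + 3/2) = (a + 1/2) * Real.Gamma (a + 1/2) := by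
    rw [show a + 3/2 = (a + 1/2) + 1 by ring, Real.Gamma_add_one ha2.ne']
  rw [r1, r2] at key
  have key2 : Real.Gamma (a + 1/2) ^ 4 * (a + 1/2) < a ^ 3 * Real.Gamma a ^ 4 := by
    nlinarith [key]
  have hR : 0 < a * Real.sqrt (a / (a + 1/2)) := by
    have : 0 < Real.sqrt (a / (a + 1/2)) := Real.sqrt_pos.mpr (by positivity)
    positivity
  have hsq : ((Real.Gamma (a + 1/2) / Real.Gamma a) ^ 2) ^ 2 <
      (a * Real.sqrt (a / (a + 1/2))) ^ 2 := by
    have hs : Real.sqrt (a / (a + 1/2)) ^ 2 = a / (a + 1/2) :=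
      Real.sq_sqrt (by positivity)
    rw [mul_pow, hs, div_pow, div_pow,
      show a ^ 2 * (a / (a + 1/2)) = a ^ 3 / (a + 1/2) by
        rw [← mul_div_assoc]; ring_nf,
      div_lt_div_iff₀ (by positivity) (by positivity)]
    nlinarith [key2]
  exact lt_of_pow_lt_pow_left₀ 2 hR.le hsq

theorem gamma_ratio_watson_refinement (x : ℝ) (hx : -1 / 2 < x) :
    (Real.Gamma (x + 1) / Real.Gamma (x + 1 / 2)) ^ 2 <
      (x + 1 / 2) * Real.sqrt ((x + 1 / 2) / (x + 1)) := by
  have ha : 0 < x + 1/2 := by linarith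
  have := gamma_aux (x + 1/2) ha
  rw [show x + 1/2 + 1/2 = x + 1 by ring] at this
  convert this using 3 <;> norm_num
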